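/- arXiv:2311.02683 — 2 statements merged into one kernel-verified Lean document; each statement's English description precedes it below -/
import Mathlib

section
/- Let Γ be a countable group acting topologically amenably on a locally compact space X, and let F be a finite group acting on X such that the F-action commutes with the Γ-action. Then the induced Γ-action on the quotient space X/F is topologically amenable. -/
/-- Topological amenability of an action `act` of a (countable, discrete) group
`Γ` on a topological space `X`. -/
def TopAmenable (Γ : Type*) [Group Γ] (X : Type*) [TopologicalSpace X]
    (act : Γ → X → X) : Prop :=
  ∀ ε > (0 : ℝ), ∀ K : Set Γ, K.Finite → ∀ L : Set X, IsCompact L →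
    ∃ m : X → Γ → ℝ,
      (∀ x g, 0 ≤ m x g) ∧ (∀ x, HasSum (m x) 1) ∧
      (∀ g, Continuous fun x => m x g) ∧
      ∀ s ∈ K, ∀ x ∈ L, ∑' g, |m x (s⁻¹ * g) - m (act s x) g| ≤ ε

/-- The orbit equivalence relation of a group action, as a setoid; the quotient
is the orbit space `X/F`. -/
def orbitSetoid (F : Type*) [Group F] (X : Type*) (actF : F → X → X)
    (h1 : ∀ x, actF 1 x = x)
    (hm : ∀ f g x, actF (f * g) x = actF f (actF g x)) : Setoid X :=
  ⟨fun x y => ∃ f : F, actF f x = y, by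
    constructor
    · exact fun x => ⟨1, h1 x⟩
    · rintro x y ⟨f, rfl⟩
      exact ⟨f⁻¹, by rw [← hm, inv_mul_cancel, h1]⟩
    · rintro x y z ⟨f, rfl⟩ ⟨g, rfl⟩
      exact ⟨g * f, by rw [hm]⟩⟩

/-- if a countable group `Γ` acts topologically amenably on a
locally compact space `X`, and a finite group `F` acts on `X` commuting with
the `Γ`-action, then the induced `Γ`-action on the orbit space `X/F` is
topologically amenable. -/
theorem stmt13 (Γ : Type*) [Group Γ] [Countable Γ]
    (X : Type*) [TopologicalSpace X] [LocallyCompactSpace X]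
    (F : Type*) [Group F] [Finite F]
    (actG : Γ → X → X) (actF : F → X → X)
    (hone : ∀ x, actG 1 x = x)
    (hmul : ∀ g h x, actG (g * h) x = actG g (actG h x))
    (hhom : ∀ g, IsHomeomorph (actG g))
    (hFone : ∀ x, actF 1 x = x)
    (hFmul : ∀ f g x, actF (f * g) x = actF f (actF g x))
    (hFcont : ∀ f, Continuous (actF f))
    (hcomm : ∀ (f : F) (g : Γ) (x : X), actF f (actG g x) = actG g (actF f x))
    (hamen : TopAmenable Γ X actG) :
    TopAmenable Γ (Quotient (orbitSetoid F X actF hFone hFmul))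
      (fun g => Quotient.map (actG g)
        (fun x y => fun ⟨f, hf⟩ => ⟨f, by rw [hcomm, hf]⟩)) := by
  classical
  have : Fintype F := Fintype.ofFinite F
  set S := orbitSetoid F X actF hFone hFmul with hS
  intro ε hε K hK L hL
  set n : ℝ := (Fintype.card F : ℝ) with hn
  have hnpos : (0 : ℝ) < n := by
    rw [hn]; exact_mod_cast Fintype.card_pos
  -- every point of the quotient has a compact "lift neighborhood"
  have hcov : ∀ q : Quotient S, ∃ N : Set X,
      IsCompact N ∧ q ∈ Quotient.mk S '' interior N ∧
      IsOpen (Quotient.mk S '' interior N) := by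
    intro q
    obtain ⟨x, rfl⟩ := Quotient.exists_rep q
    obtain ⟨N, hNc, hNn⟩ := exists_compact_mem_nhds x
    have hopen : IsOpen (Quotient.mk S '' interior N) := by
      rw [isOpen_coinduced (f := Quotient.mk S)]
      have : Quotient.mk S ⁻¹' (Quotient.mk S '' interior N)
          = ⋃ f : F, actF f '' interior N := by
        ext y
        simp only [Set.mem_preimage, Set.mem_image, Set.mem_iUnion]
        constructor
        · rintro ⟨z, hz, hzy⟩
          obtain ⟨f, hf⟩ := Quotient.exact hzy
          exact ⟨f, z, hz, hf⟩
        · rintro ⟨f, z, hz, hf⟩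
          exact ⟨z, hz, Quotient.sound ⟨f, hf⟩⟩
      rw [this]
      refine isOpen_iUnion fun f => ?_
      have hmap : IsOpenMap (actF f) := by
        have hli : Function.LeftInverse (actF f⁻¹) (actF f) := fun y => by
          rw [← hFmul, inv_mul_cancel, hFone]
        have hri : Function.RightInverse (actF f⁻¹) (actF f) := fun y => by
          rw [← hFmul, mul_inv_cancel, hFone]
        exact (Homeomorph.mk ⟨actF f, actF f⁻¹, hli, hri⟩ (hFcont f)
          (hFcont f⁻¹)).isOpenMap
      exact hmap _ isOpen_interior
    exact ⟨N, hNc, ⟨x, mem_interior_iff_mem_nhds.mpr hNn, rfl⟩, hopen⟩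
  choose N hNc hNm hNo using hcov
  -- finite subcover of L
  obtain ⟨t, ht⟩ := hL.elim_finite_subcover
    (fun q => Quotient.mk S '' interior (N q)) hNo
    (fun q _ => Set.mem_iUnion.mpr ⟨q, hNm q⟩)
  set L' : Set X := ⋃ q ∈ t, N q with hL'
  have hL'c : IsCompact L' := t.finite_toSet.isCompact_biUnion fun q _ => hNc q
  have hlift : ∀ q ∈ L, ∃ x ∈ L', Quotient.mk S x = q := by
    intro q hq
    obtain ⟨q₀, hq₀t, hq₀⟩ := Set.mem_iUnion₂.mp (ht hq)
    obtain ⟨x, hx, hxq⟩ := hq₀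
    exact ⟨x, Set.mem_biUnion hq₀t (interior_subset hx), hxq⟩
  -- saturate
  set L'' : Set X := ⋃ f : F, actF f '' L' with hL''
  have hL''c : IsCompact L'' := isCompact_iUnion fun f => hL'c.image (hFcont f)
  obtain ⟨m, hpos, hsum, hcont, hest⟩ := hamen ε hε K hK L'' hL''c
  -- the averaged mean
  set mb : X → Γ → ℝ := fun x g => (∑ f : F, m (actF f x) g) / n with hmb
  have hwd : ∀ a b : X, a ≈ b → mb a = mb b := by
    rintro a b ⟨f₀, rfl⟩
    funext g
    simp only [hmb]
    congr 1
    refine Fintype.sum_equiv (Equiv.mulRight f₀⁻¹) _ _ fun f => ?_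
    simp only [Equiv.coe_mulRight, ← hFmul, inv_mul_cancel_right]
  refine ⟨Quotient.lift mb hwd, ?_, ?_, ?_, ?_⟩
  · refine Quotient.ind fun x g => ?_
    simp only [Quotient.lift_mk, hmb]
    have : 0 ≤ ∑ f : F, m (actF f x) g :=
      Finset.sum_nonneg fun f _ => hpos _ _
    positivity
  · refine Quotient.ind fun x => ?_
    have h1 : HasSum (fun g => ∑ f : F, m (actF f x) g) n := by
      have := hasSum_sum (s := (Finset.univ : Finset F))
        (f := fun f g => m (actF f x) g) (a := fun f => (1 : ℝ))
        (fun f _ => hsum (actF f x))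
      simpa [hn] using this
    have := h1.div_const n
    simpa [div_self hnpos.ne'] using this
  · intro g
    have heq : (fun q : Quotient S => Quotient.lift mb hwd q g)
        = Quotient.lift (fun x => mb x g) (fun a b h => congrFun (hwd a b h) g) :=
      funext (Quotient.ind fun x => rfl)
    rw [heq]
    apply Continuous.quotient_lift
    have : Continuous fun x : X => ∑ f : F, m (actF f x) g :=
      continuous_finset_sum _ fun f _ => (hcont g).comp (hFcont f)
    exact this.div_const n
  · intro s hs q hq
    obtain ⟨x, hxL', rfl⟩ := hlift q hq
    simp only [Quotient.map_mk, Quotient.lift_mk]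
    -- pointwise data
    set a : F → Γ → ℝ := fun f g =>
      m (actF f x) (s⁻¹ * g) - m (actG s (actF f x)) g with ha
    have hsumm : ∀ f : F, Summable fun g => |a f g| := by
      intro f
      have h1 : Summable (m (actF f x)) := (hsum _).summable
      have h2 : Summable fun g => m (actF f x) (s⁻¹ * g) :=
        h1.comp_injective (mul_right_injective s⁻¹)
      exact (h2.sub (hsum (actG s (actF f x))).summable).abs
    have hbound : ∀ f : F, ∑' g, |a f g| ≤ ε := by
      intro f
      have hmem : actF f x ∈ L'' := Set.mem_iUnion.mpr ⟨f, ⟨x, hxL', rfl⟩⟩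
      exact hest s hs (actF f x) hmem
    have hrw : ∀ g, mb x (s⁻¹ * g) - mb (actG s x) g = (∑ f : F, a f g) / n := by
      intro g
      simp only [hmb, ha, div_sub_div_same, Finset.sum_sub_distrib]
      congr 2
      exact Finset.sum_congr rfl fun f _ => by rw [hcomm]
    calc ∑' g, |mb x (s⁻¹ * g) - mb (actG s x) g|
        = ∑' g, (|∑ f : F, a f g|) / n := by
          refine tsum_congr fun g => ?_
          rw [hrw g, abs_div, abs_of_pos hnpos]
      _ = (∑' g, |∑ f : F, a f g|) / n := by rw [tsum_div_const]
      _ ≤ (∑' g, ∑ f : F, |a f g|) / n := by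
          gcongr
          · exact (summable_sum fun f _ =>
              (summable_abs_iff.mp (hsumm f))).abs
          · exact summable_sum fun f _ => hsumm f
          · exact Finset.abs_sum_le_sum_abs _ _
      _ = (∑ f : F, ∑' g, |a f g|) / n := by
          rw [Summable.tsum_finsetSum fun f _ => hsumm f]
      _ ≤ (∑ f : F, ε) / n := by
          gcongr
          exact hbound _
      _ = ε := by
          rw [Finset.sum_const, Finset.card_univ, nsmul_eq_mul, ← hn,
            mul_div_cancel_left₀ _ hnpos.ne']
end

section
/- Let Γ be a countable group acting topologically amenably on a locally compact space X. Then for every n ≥ 2, the diagonal action of Γ on the n-fold symmetric product ΣⁿX = Xⁿ/Sym(n) is topologically amenable. -/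
/-- The setoid on `Xⁿ` identifying tuples up to permutation of the coordinates
by `Sym(n)`; the quotient is the `n`-fold symmetric product `ΣⁿX`. -/
def symSetoid (n : ℕ) (X : Type*) : Setoid (Fin n → X) :=
  ⟨fun v w => ∃ σ : Equiv.Perm (Fin n), v ∘ σ = w, by
    constructor
    · exact fun v => ⟨Equiv.refl _, rfl⟩
    · rintro v w ⟨σ, rfl⟩
      exact ⟨σ.symm, by ext i; simp⟩
    · rintro u v w ⟨σ, rfl⟩ ⟨τ, rfl⟩
      exact ⟨τ.trans σ, rfl⟩⟩

open scoped Topology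

lemma symQuot_open (n : ℕ) (X : Type*) [TopologicalSpace X] :
    IsOpenMap (Quotient.mk (symSetoid n X)) := by
  intro U hU
  have : (Quot.mk (symSetoid n X).r) ⁻¹' (Quotient.mk (symSetoid n X) '' U)
      = ⋃ σ : Equiv.Perm (Fin n), (fun w => w ∘ σ) ⁻¹' U := by
    ext w
    simp only [Set.mem_preimage, Set.mem_image, Set.mem_iUnion]
    constructor
    · rintro ⟨u, hu, he⟩
      obtain ⟨σ, hσ⟩ := Quotient.exact he
      exact ⟨σ⁻¹, by
        have : w ∘ ⇑σ⁻¹ = u := by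
          funext i; have := congrFun hσ (σ⁻¹ i); simpa using this.symm
        rwa [this]⟩
    · rintro ⟨σ, hσ⟩
      exact ⟨w ∘ σ, hσ, Quotient.sound ⟨σ⁻¹, by funext i; simp⟩⟩
  have hopen : IsOpen ((Quot.mk (symSetoid n X).r) ⁻¹' (Quotient.mk (symSetoid n X) '' U)) := by
    rw [this]
    exact isOpen_iUnion fun σ => hU.preimage (by continuity)
  exact hopen

lemma exists_compact_lift (n : ℕ) (X : Type*) [TopologicalSpace X] [LocallyCompactSpace X]
    {L : Set (Quotient (symSetoid n X))} (hL : IsCompact L) :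
    ∃ L' : Set X, IsCompact L' ∧
      ∀ x ∈ L, ∃ v : Fin n → X, Quotient.mk (symSetoid n X) v = x ∧ ∀ i, v i ∈ L' := by
  have hrep : ∀ x : Quotient (symSetoid n X), ∃ v, Quotient.mk (symSetoid n X) v = x :=
    fun x => Quotient.exists_rep x
  choose rep hrep using hrep
  have hN : ∀ (x : Quotient (symSetoid n X)) (i : Fin n),
      ∃ N : Set X, IsCompact N ∧ N ∈ 𝓝 (rep x i) := fun x i => exists_compact_mem_nhds _
  choose N hNc hNn using hN
  set U : ∀ x ∈ L, Set (Quotient (symSetoid n X)) :=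
    fun x _ => Quotient.mk (symSetoid n X) '' (Set.univ.pi (N x)) with hU
  have hUn : ∀ (x) (hx : x ∈ L), U x hx ∈ 𝓝 x := by
    intro x hx
    have h1 : Set.univ.pi (N x) ∈ 𝓝 (rep x) :=
      set_pi_mem_nhds Set.finite_univ fun i _ => hNn x i
    have := (symQuot_open n X).image_mem_nhds h1
    rwa [hrep x] at this
  obtain ⟨t, ht⟩ := hL.elim_nhds_subcover' U hUn
  refine ⟨⋃ x ∈ t, ⋃ i, N x i, ?_, ?_⟩
  · exact t.finite_toSet.isCompact_biUnion fun x _ => isCompact_iUnion fun i => hNc x i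
  · intro y hy
    obtain ⟨x, hxt, hyx⟩ := by simpa only [Set.mem_iUnion] using ht hy
    obtain ⟨v, hv, he⟩ := hyx
    exact ⟨v, he, fun i => Set.mem_biUnion hxt (Set.mem_iUnion.2 ⟨i, hv i trivial⟩)⟩


/-- if a countable group `Γ` acts topologically amenably on a
locally compact space `X`, then for every `n ≥ 2` the diagonal `Γ`-action on
the `n`-fold symmetric product `ΣⁿX = Xⁿ/Sym(n)` is topologically amenable. -/
theorem stmt14 (Γ : Type*) [Group Γ] [Countable Γ]
    (X : Type*) [TopologicalSpace X] [LocallyCompactSpace X]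
    (act : Γ → X → X)
    (hone : ∀ x, act 1 x = x)
    (hmul : ∀ g h x, act (g * h) x = act g (act h x))
    (hhom : ∀ g, IsHomeomorph (act g))
    (hamen : TopAmenable Γ X act)
    (n : ℕ) (hn : 2 ≤ n) :
    TopAmenable Γ (Quotient (symSetoid n X))
      (fun g => Quotient.map (fun v i => act g (v i))
        (fun v w => fun ⟨σ, hσ⟩ => ⟨σ, by rw [← hσ]; rfl⟩)) := by
  intro ε hε K hK L hL
  have hn0 : (0:ℝ) < (n:ℝ) := by exact_mod_cast lt_of_lt_of_le (by norm_num) hn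
  have hn' : (n:ℝ) ≠ 0 := ne_of_gt hn0
  obtain ⟨L', hL'c, hL'rep⟩ := exists_compact_lift n X hL
  obtain ⟨m, hpos, hsum, hcont, hest⟩ := hamen ε hε K hK L' hL'c
  set F : (Fin n → X) → Γ → ℝ := fun v g => (∑ i, m (v i) g) / n with hFdef
  have hF : ∀ v w, (symSetoid n X).r v w → F v = F w := by
    rintro v w ⟨σ, rfl⟩
    funext g
    simp only [hFdef, Function.comp]
    rw [Equiv.sum_comp σ (fun i => m (v i) g)]
  refine ⟨Quotient.lift F hF, ?_, ?_, ?_, ?_⟩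
  · intro x g
    induction x using Quotient.ind with
    | _ v =>
      exact div_nonneg (Finset.sum_nonneg fun i _ => hpos (v i) g) (le_of_lt hn0)
  · intro x
    induction x using Quotient.ind with
    | _ v =>
      have h1 : HasSum (fun g => ∑ i, m (v i) g) (∑ _i : Fin n, (1:ℝ)) :=
        hasSum_sum fun i _ => hsum (v i)
      have h2 := h1.div_const (n : ℝ)
      simpa [div_self hn'] using h2
  · intro g
    refine (isQuotientMap_quotient_mk' (s := symSetoid n X)).continuous_iff.mpr ?_
    exact ((continuous_finset_sum _ fun i _ => (hcont g).comp (continuous_apply i))).div_const _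
  · intro s hs x hx
    obtain ⟨v, hv, hvL'⟩ := hL'rep x hx
    rw [← hv]
    simp only [Quotient.map_mk, Quotient.lift_mk]
    set w : Fin n → X := fun i => act s (v i) with hw
    set a : Fin n → Γ → ℝ := fun i g => m (v i) (s⁻¹ * g) - m (w i) g with ha
    have h1 : ∀ i, Summable fun g => m (v i) (s⁻¹ * g) := fun i =>
      ((hsum (v i)).summable).comp_injective (mul_right_injective s⁻¹)
    have h2 : ∀ i, Summable (m (w i)) := fun i => (hsum (w i)).summable
    have hai : ∀ i, Summable fun g => a i g := fun i => (h1 i).sub (h2 i)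
    have hAi : ∀ i, Summable fun g => |a i g| := fun i => (hai i).abs
    have hkey : ∀ g, F v (s⁻¹ * g) - F w g = (∑ i, a i g) / n := by
      intro g
      simp only [hFdef, ha, div_sub_div_same, Finset.sum_sub_distrib]
    calc ∑' g, |F v (s⁻¹ * g) - F w g|
        = ∑' g, |∑ i, a i g| / n := by
          refine tsum_congr fun g => ?_
          rw [hkey g, abs_div, abs_of_pos hn0]
      _ ≤ ∑' g, (∑ i, |a i g|) / n := by
          refine Summable.tsum_le_tsum (fun g => ?_) ?_ ?_
          · gcongr
            exact Finset.abs_sum_le_sum_abs _ _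
          · exact ((summable_sum fun i _ => hai i).abs).div_const _
          · exact ((summable_sum fun i _ => hAi i)).div_const _
      _ = (∑ i, ∑' g, |a i g|) / n := by
          rw [tsum_div_const, Summable.tsum_finsetSum fun i _ => hAi i]
      _ ≤ ((n:ℝ) * ε) / n := by
          gcongr
          calc ∑ i, ∑' g, |a i g| ≤ ∑ _i : Fin n, ε :=
                Finset.sum_le_sum fun i _ => hest s hs (v i) (hvL' i)
            _ = (n:ℝ) * ε := by simp [mul_comm]
      _ = ε := by field_simp
end
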